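/- There exists a constant θ_2 > 0, independent of N' and T', such that for every real T' > 0, every integer N' ≥ 1, and every real x ≥ 0, the value P_{N',T'}(ix) is a positive real number and P_{N',T'}(ix) ≥ e^{−θ_2 √(C_{N',T'} x)}. -/

import Mathlib

/-- `C_{N',T'} = T' / (2 Σ_{k=N'}^∞ 1/k²)`. -/
noncomputable def CNT (N' : ℕ) (T' : ℝ) : ℝ :=
  T' / (2 * ∑' j : ℕ, 1 / ((j + N' : ℕ) : ℝ) ^ 2)

/-- The mollifier `P_{N',T'}(z) = e^{izT'/2} ∏_{k=N'}^∞ cos (a_k z)` with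
`a_k = C_{N',T'}/k²`. -/
noncomputable def PNT (N' : ℕ) (T' : ℝ) (z : ℂ) : ℂ :=
  Complex.exp (Complex.I * z * (T' / 2)) *
    ∏' j : ℕ, Complex.cos ((CNT N' T' / ((j + N' : ℕ) : ℝ) ^ 2 : ℝ) * z)

namespace MollAux

open Filter Finset

lemma hasProd_exp {f : ℕ → ℝ} {a : ℝ} (h : HasSum f a) :
    HasProd (fun i => Real.exp (f i)) (Real.exp a) := by
  have h2 := (Real.continuous_exp.tendsto a).comp h
  simpa [HasProd, Function.comp_def, Real.exp_sum] using h2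

lemma hasProd_ofReal {f : ℕ → ℝ} {a : ℝ} (h : HasProd f a) :
    HasProd (fun i => (f i : ℂ)) (a : ℂ) := by
  have h2 := (Complex.continuous_ofReal.tendsto a).comp h
  simpa [HasProd, Function.comp_def] using h2

lemma summable_shift (N : ℕ) : Summable (fun j : ℕ => 1 / ((j + N : ℕ) : ℝ) ^ 2) := by
  have h : Summable (fun n : ℕ => 1 / (n : ℝ) ^ 2) :=
    Real.summable_one_div_nat_pow.mpr one_lt_two
  have := (summable_nat_add_iff (f := fun n : ℕ => 1 / (n : ℝ) ^ 2) N).mpr h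
  simpa using this

lemma tail_bound (t : ℝ) (ht : 0 ≤ t) (M : ℕ) :
    ∑' j : ℕ, t / ((j + (M + 1) : ℕ) : ℝ) ^ 2 ≤ t * (2 / (M + 1)) := by
  have hsum : Summable (fun j : ℕ => t / ((j + (M + 1) : ℕ) : ℝ) ^ 2) := by
    simpa [div_eq_mul_inv, mul_comm] using (summable_shift (M + 1)).mul_left t
  have key : ∀ n : ℕ, ∑ j ∈ range n, (1 : ℝ) / ((j + (M + 1) : ℕ) : ℝ) ^ 2 ≤ 2 / (M + 1) := by
    intro n
    have h1 : ∑ j ∈ range n, (1 : ℝ) / ((j + (M + 1) : ℕ) : ℝ) ^ 2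
        = ∑ i ∈ Ico (M + 1) (n + (M + 1)), (1 : ℝ) / (i : ℝ) ^ 2 := by
      rw [Finset.sum_Ico_eq_sum_range]
      simp [add_comm]
    rw [h1, Finset.Ico_add_one_left_eq_Ioo]
    calc ∑ i ∈ Ioo M (n + (M + 1)), (1 : ℝ) / (i : ℝ) ^ 2
        = ∑ i ∈ Ioo M (n + (M + 1)), ((i : ℝ) ^ 2)⁻¹ := by simp [one_div]
      _ ≤ 2 / (M + 1) := sum_Ioo_inv_sq_le M _
  calc ∑' j : ℕ, t / ((j + (M + 1) : ℕ) : ℝ) ^ 2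
      = t * ∑' j : ℕ, 1 / ((j + (M + 1) : ℕ) : ℝ) ^ 2 := by
        rw [← tsum_mul_left]; congr 1; ext j; ring
    _ ≤ t * (2 / (M + 1)) := by
        apply mul_le_mul_of_nonneg_left _ ht
        exact Real.tsum_le_of_sum_range_le (fun n => by positivity) key

/-- The central counting estimate: `∑_{k≥1} min(t/k², 1) ≤ 4 √t`. -/
lemma min_sum_bound (t : ℝ) (ht : 0 ≤ t) :
    ∑' j : ℕ, min (t / ((j + 1 : ℕ) : ℝ) ^ 2) 1 ≤ 4 * Real.sqrt t := by
  have hs1 : Summable (fun j : ℕ => t / ((j + 1 : ℕ) : ℝ) ^ 2) := by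
    simpa [div_eq_mul_inv, mul_comm] using (summable_shift 1).mul_left t
  have hterm_nonneg : ∀ j : ℕ, 0 ≤ min (t / ((j + 1 : ℕ) : ℝ) ^ 2) 1 := by
    intro j; positivity
  have hsmin : Summable (fun j : ℕ => min (t / ((j + 1 : ℕ) : ℝ) ^ 2) 1) :=
    Summable.of_nonneg_of_le hterm_nonneg (fun j => min_le_left _ _) hs1
  rcases le_or_gt t 1 with h1 | h1
  · -- small t : bound by t * 2 ≤ 2 √t
    have hst : t ≤ Real.sqrt t := by
      nlinarith [Real.sq_sqrt ht, Real.sqrt_nonneg t, Real.sqrt_le_sqrt h1, Real.sqrt_one]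
    calc ∑' j : ℕ, min (t / ((j + 1 : ℕ) : ℝ) ^ 2) 1
        ≤ ∑' j : ℕ, t / ((j + 1 : ℕ) : ℝ) ^ 2 :=
          Summable.tsum_le_tsum (fun j => min_le_left _ _) hsmin hs1
      _ ≤ t * (2 / ((0:ℕ) + 1)) := tail_bound t ht 0
      _ ≤ 4 * Real.sqrt t := by
          norm_num
          nlinarith [Real.sqrt_nonneg t]
  · -- large t : split at M = ⌈√t⌉
    set M : ℕ := ⌈Real.sqrt t⌉₊ with hM
    have hsq1 : (1 : ℝ) ≤ Real.sqrt t := by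
      rw [show (1:ℝ) = Real.sqrt 1 by simp]
      exact Real.sqrt_le_sqrt h1.le
    have hMle : (M : ℝ) ≤ Real.sqrt t + 1 := (Nat.ceil_lt_add_one (by positivity)).le
    have hMge : Real.sqrt t ≤ (M : ℝ) := Nat.le_ceil _
    rw [← Summable.sum_add_tsum_nat_add M hsmin]
    have hhead : ∑ j ∈ range M, min (t / ((j + 1 : ℕ) : ℝ) ^ 2) 1 ≤ (M : ℝ) := by
      calc ∑ j ∈ range M, min (t / ((j + 1 : ℕ) : ℝ) ^ 2) 1
          ≤ ∑ j ∈ range M, (1 : ℝ) := sum_le_sum (fun j _ => min_le_right _ _)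
        _ = (M : ℝ) := by simp
    have htail : ∑' j : ℕ, min (t / (((j + M) + 1 : ℕ) : ℝ) ^ 2) 1
        ≤ t * (2 / (M + 1)) := by
      have hre : (fun j : ℕ => min (t / (((j + M) + 1 : ℕ) : ℝ) ^ 2) 1)
          = fun j : ℕ => min (t / ((j + (M + 1) : ℕ) : ℝ) ^ 2) 1 := by
        funext j; rw [Nat.add_assoc]
      have hsum2 : Summable (fun j : ℕ => t / ((j + (M + 1) : ℕ) : ℝ) ^ 2) := by
        simpa [div_eq_mul_inv, mul_comm] using (summable_shift (M + 1)).mul_left t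
      have hsmin2 : Summable (fun j : ℕ => min (t / ((j + (M + 1) : ℕ) : ℝ) ^ 2) 1) :=
        Summable.of_nonneg_of_le (fun j => by positivity) (fun j => min_le_left _ _) hsum2
      have h2 : ∑' j : ℕ, min (t / ((j + (M + 1) : ℕ) : ℝ) ^ 2) 1
          ≤ ∑' j : ℕ, t / ((j + (M + 1) : ℕ) : ℝ) ^ 2 :=
        Summable.tsum_le_tsum (fun j => min_le_left _ _) hsmin2 hsum2
      rw [hre]
      exact h2.trans (tail_bound t ht M)
    have hdiv : t * (2 / (M + 1)) ≤ 2 * Real.sqrt t := by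
      rw [mul_div_assoc']
      rw [div_le_iff₀ (by positivity)]
      have ht2 : t = Real.sqrt t * Real.sqrt t := (Real.mul_self_sqrt ht).symm
      nlinarith [Real.sqrt_nonneg t]
    calc ∑ j ∈ range M, min (t / ((j + 1 : ℕ) : ℝ) ^ 2) 1
          + ∑' j : ℕ, min (t / (((j + M) + 1 : ℕ) : ℝ) ^ 2) 1
        ≤ (M : ℝ) + 2 * Real.sqrt t := add_le_add hhead (htail.trans hdiv)
      _ ≤ 4 * Real.sqrt t := by nlinarith

lemma log_cosh_le (y : ℝ) (hy : 0 ≤ y) : Real.log (Real.cosh y) ≤ y := by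
  have h1 : Real.cosh y ≤ Real.exp y := by
    rw [Real.cosh_eq]
    have := Real.exp_le_exp.mpr (neg_le_self hy)
    linarith
  calc Real.log (Real.cosh y) ≤ Real.log (Real.exp y) :=
        Real.log_le_log (Real.cosh_pos y) h1
    _ = y := Real.log_exp y

lemma log_cosh_ge (y : ℝ) (hy : 0 ≤ y) : y - 1 ≤ Real.log (Real.cosh y) := by
  have h1 : Real.exp (y - 1) ≤ Real.cosh y := by
    rw [Real.cosh_eq]
    have h2 : Real.exp (y - 1) ≤ Real.exp y / 2 := by
      rw [Real.exp_sub, div_le_div_iff₀ (by positivity) (by norm_num)]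
      have := Real.exp_one_gt_d9
      nlinarith [Real.exp_pos y, Real.exp_pos 1]
    have := Real.exp_pos (-y)
    linarith
  calc y - 1 = Real.log (Real.exp (y - 1)) := (Real.log_exp _).symm
    _ ≤ Real.log (Real.cosh y) := Real.log_le_log (Real.exp_pos _) h1

end MollAux

theorem mollifier_lower_bound_imaginary_axis :
    ∃ θ₂ > (0:ℝ),
      ∀ T' : ℝ, 0 < T' → ∀ N' : ℕ, 1 ≤ N' → ∀ x : ℝ, 0 ≤ x →
        (PNT N' T' (Complex.I * (x : ℂ))).im = 0 ∧
        0 < (PNT N' T' (Complex.I * (x : ℂ))).re ∧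
        Real.exp (-θ₂ * Real.sqrt (CNT N' T' * x)) ≤
          (PNT N' T' (Complex.I * (x : ℂ))).re := by
  refine ⟨4, by norm_num, ?_⟩
  intro T' hT N' hN x hx
  have hsum_s : Summable (fun j : ℕ => 1 / ((j + N' : ℕ) : ℝ) ^ 2) := MollAux.summable_shift N'
  have hNpos : (0 : ℝ) < ((0 + N' : ℕ) : ℝ) := by
    have : 0 < N' := hN
    exact_mod_cast Nat.lt_of_lt_of_le this (Nat.le_add_left _ _)
  have hs_pos : 0 < ∑' j : ℕ, 1 / ((j + N' : ℕ) : ℝ) ^ 2 :=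
    Summable.tsum_pos hsum_s (fun j => by positivity) 0 (by positivity)
  set s : ℝ := ∑' j : ℕ, 1 / ((j + N' : ℕ) : ℝ) ^ 2 with hs_def
  set C : ℝ := CNT N' T' with hC_def
  have hC : 0 < C := div_pos hT (by positivity)
  set t : ℝ := C * x with ht_def
  have ht : 0 ≤ t := mul_nonneg hC.le hx
  -- the real sequence
  set y : ℕ → ℝ := fun j => t / ((j + N' : ℕ) : ℝ) ^ 2 with hy_def
  have hy_nonneg : ∀ j, 0 ≤ y j := fun j => by
    have : (0:ℝ) < ((j + N' : ℕ) : ℝ) := by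
      have : 0 < j + N' := Nat.lt_of_lt_of_le hN (Nat.le_add_left _ _)
      exact_mod_cast this
    positivity
  have hsum_y : Summable y := by
    have := hsum_s.mul_left t
    refine this.congr fun j => ?_
    simp [hy_def, div_eq_mul_inv]
  -- the deficiency d
  set d : ℕ → ℝ := fun j => y j - Real.log (Real.cosh (y j)) with hd_def
  have hd_nonneg : ∀ j, 0 ≤ d j := fun j => by
    have := MollAux.log_cosh_le (y j) (hy_nonneg j); simp [hd_def]; linarith
  have hd_le_y : ∀ j, d j ≤ y j := fun j => by
    have h1 : 0 ≤ Real.log (Real.cosh (y j)) :=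
      Real.log_nonneg (Real.one_le_cosh _)
    simp [hd_def]; linarith
  have hd_le_one : ∀ j, d j ≤ 1 := fun j => by
    have := MollAux.log_cosh_ge (y j) (hy_nonneg j); simp [hd_def]; linarith
  have hsum_d : Summable d := Summable.of_nonneg_of_le hd_nonneg hd_le_y hsum_y
  have hsum_lc : Summable (fun j => Real.log (Real.cosh (y j))) := by
    have := hsum_y.sub hsum_d
    refine this.congr fun j => ?_
    simp [hd_def]
  set L : ℝ := ∑' j, Real.log (Real.cosh (y j)) with hL_def
  -- the product
  have hprod : HasProd (fun j => Real.cosh (y j)) (Real.exp L) := by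
    have h1 := MollAux.hasProd_exp hsum_lc.hasSum
    have hfun : (fun j => Real.exp (Real.log (Real.cosh (y j))))
        = fun j => Real.cosh (y j) :=
      funext fun j => Real.exp_log (Real.cosh_pos _)
    rwa [hfun] at h1
  have hprodC : HasProd (fun j : ℕ => ((Real.cosh (y j) : ℝ) : ℂ)) ((Real.exp L : ℝ) : ℂ) :=
    MollAux.hasProd_ofReal hprod
  -- identify the factors of PNT
  have hcos : (fun j : ℕ => Complex.cos ((C / ((j + N' : ℕ) : ℝ) ^ 2 : ℝ) * (Complex.I * (x:ℂ))))
      = fun j : ℕ => ((Real.cosh (y j) : ℝ) : ℂ) := by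
    funext j
    have h1 : ((C / ((j + N' : ℕ) : ℝ) ^ 2 : ℝ) : ℂ) * (Complex.I * (x:ℂ))
        = ((y j : ℝ) : ℂ) * Complex.I := by
      simp only [hy_def, ht_def]
      push_cast
      ring
    rw [h1, Complex.cos_mul_I, Complex.ofReal_cosh]
  have hprod_eq : (∏' j : ℕ, Complex.cos ((C / ((j + N' : ℕ) : ℝ) ^ 2 : ℝ) * (Complex.I * (x:ℂ))))
      = ((Real.exp L : ℝ) : ℂ) := by
    rw [hcos]
    exact hprodC.tprod_eq
  -- the exponential factor
  have hexp_eq : Complex.exp (Complex.I * (Complex.I * (x:ℂ)) * ((T':ℂ) / 2))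
      = ((Real.exp (-(x * T' / 2)) : ℝ) : ℂ) := by
    have h1 : Complex.I * (Complex.I * (x:ℂ)) * ((T':ℂ) / 2)
        = ((-(x * T' / 2) : ℝ) : ℂ) := by
      have h2 : Complex.I * Complex.I = -1 := Complex.I_mul_I
      push_cast
      ring_nf
      rw [Complex.I_sq]
      ring
    rw [h1, Complex.ofReal_exp]
  -- value of PNT
  have hP : PNT N' T' (Complex.I * (x:ℂ)) = ((Real.exp (L - x * T' / 2) : ℝ) : ℂ) := by
    rw [PNT, ← hC_def, hprod_eq, hexp_eq, ← Complex.ofReal_mul, ← Real.exp_add]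
    norm_num
    ring_nf
  -- the sum identity : x*T'/2 = ∑ y j
  have hCs : C * s = T' / 2 := by
    rw [hC_def, CNT, ← hs_def]
    field_simp
  have hsum_y_val : ∑' j, y j = x * T' / 2 := by
    have h1 : ∑' j, y j = t * s := by
      rw [hs_def, ← tsum_mul_left]
      congr 1; funext j; simp [hy_def, div_eq_mul_inv]
    rw [h1, ht_def]
    calc C * x * s = x * (C * s) := by ring
      _ = x * T' / 2 := by rw [hCs]; ring
  -- the deficiency bound
  have hd_sum_le : ∑' j, d j ≤ 4 * Real.sqrt t := by
    have hmin_s : Summable (fun j : ℕ => min (t / ((j + 1 : ℕ) : ℝ) ^ 2) 1) := by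
      have hs1 : Summable (fun j : ℕ => t / ((j + 1 : ℕ) : ℝ) ^ 2) := by
        simpa [div_eq_mul_inv, mul_comm] using (MollAux.summable_shift 1).mul_left t
      exact Summable.of_nonneg_of_le (fun j => by positivity) (fun j => min_le_left _ _) hs1
    have h1 : ∑' j, d j ≤ ∑' j : ℕ, min (t / ((j + 1 : ℕ) : ℝ) ^ 2) 1 := by
      apply Summable.tsum_le_tsum _ hsum_d hmin_s
      intro j
      have hle : y j ≤ t / ((j + 1 : ℕ) : ℝ) ^ 2 := by
        have h2 : ((j + 1 : ℕ) : ℝ) ≤ ((j + N' : ℕ) : ℝ) := by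
          exact_mod_cast Nat.add_le_add_left hN j
        have h3 : (0:ℝ) < ((j + 1 : ℕ) : ℝ) := by positivity
        show t / ((j + N' : ℕ) : ℝ) ^ 2 ≤ t / ((j + 1 : ℕ) : ℝ) ^ 2
        gcongr
      exact le_min ((hd_le_y j).trans hle) (hd_le_one j)
    exact h1.trans (MollAux.min_sum_bound t ht)
  have hkey : -(4 * Real.sqrt t) ≤ L - x * T' / 2 := by
    have h1 : x * T' / 2 - L = ∑' j, d j := by
      rw [← hsum_y_val, hL_def, ← Summable.tsum_sub hsum_y hsum_lc]
    linarith [hd_sum_le, h1 ▸ hd_sum_le]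
  rw [hP]
  refine ⟨Complex.ofReal_im _, ?_, ?_⟩
  · rw [Complex.ofReal_re]; exact Real.exp_pos _
  · rw [Complex.ofReal_re]
    apply Real.exp_le_exp.mpr
    linarith
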